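/- For every n ≥ 2, the bilateral treewidth of QParity_n with respect to the trivial dependency poset equals 2: the path-shaped decomposition with bags ∅, {x₁}, {x₁,z₁}, {z₁}, {z₁,x₂}, {z₁,x₂,z₂}, {x₂,z₂}, {z₂}, …, {x_n,z_n,u}, {z_n,u}, {u}, ∅ (taken as a single trunk) is a trunk-aligned tree decomposition of width 2, and no trunk-aligned tree decomposition of width less than 2 exists. -/

import Mathlib

noncomputable section
attribute [local instance] Classical.propDecidable

/-- A literal is a variable with a polarity; a clause is a finite set of literals. -/
abbrev Clause (V : Type) := Finset (V × Bool)

/-- A CNF matrix is a finite set of clauses. -/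
abbrev CNF (V : Type) := Finset (Clause V)

variable {V : Type}

/-- A clause is tautological if it contains some variable in both polarities. -/
def Tauto (C : Clause V) : Prop := ∃ v : V, (v, true) ∈ C ∧ (v, false) ∈ C

/-- A variable occurs in a clause. -/
def varIn (v : V) (C : Clause V) : Prop := ∃ b : Bool, (v, b) ∈ C

def clauseSat (α : V → Bool) (C : Clause V) : Prop := ∃ l ∈ C, α l.1 = l.2

def cnfSat (α : V → Bool) (φ : CNF V) : Prop := ∀ C ∈ φ, clauseSat α C

/-- Truth of the QBF with existential variables `E`, universal variables `U`,
dependency relation `D` and matrix `φ`: there is a winning existential strategy,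
i.e. a choice function for every existential variable that depends only on the
universal variables it depends on (w.r.t. `D`), winning against every universal
assignment. -/
def QBFTrue (E U : Finset V) (D : V → V → Prop) (φ : CNF V) : Prop :=
  ∃ τ : V → (V → Bool) → Bool,
    (∀ x ∈ E, ∀ β β' : V → Bool, (∀ u ∈ U, D u x → β u = β' u) → τ x β = τ x β') ∧
    ∀ β : V → Bool, cnfSat (fun w => if w ∈ E then τ w β else β w) φ

/-- The clauses of `φ` containing the literal `x`. -/
def posCl (φ : CNF V) (x : V) : CNF V := φ.filter (fun C => (x, true) ∈ C)

/-- The clauses of `φ` containing the literal `¬x`. -/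
def negCl (φ : CNF V) (x : V) : CNF V := φ.filter (fun C => (x, false) ∈ C)

/-- `R(φ,x)`: all non-tautological resolvents `(C₁ \ {x}) ∪ (C₂ \ {¬x})` with
`C₁ ∈ φ_x` and `C₂ ∈ φ_{¬x}`. -/
def resolvents (φ : CNF V) (x : V) : CNF V :=
  ((posCl φ x ×ˢ negCl φ x).image
    (fun p => p.1.erase (x, true) ∪ p.2.erase (x, false))).filter (fun C => ¬ Tauto C)

/-- Resolution over `x` in `φ`. -/
def res (φ : CNF V) (x : V) : CNF V := (φ \ (posCl φ x ∪ negCl φ x)) ∪ resolvents φ x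

/-- Reduction of `u` from `φ`: delete both literals of `u` from every clause. -/
def red (φ : CNF V) (u : V) : CNF V :=
  φ.image (fun C => (C.erase (u, true)).erase (u, false))

/-- Restrict `φ` by the assignment `δ` on the variable set `S`: remove clauses
satisfied on `S` and delete falsified literals over `S`. -/
def restrict (φ : CNF V) (S : Finset V) (δ : V → Bool) : CNF V :=
  (φ.filter (fun C => ¬ ∃ l ∈ C, l.1 ∈ S ∧ δ l.1 = l.2)).image
    (fun C => C.filter (fun l => l.1 ∉ S))

/-- The combined assignment `(β, τ)`. -/
def combined (E : Finset V) (τ : V → (V → Bool) → Bool) (β : V → Bool) : V → Bool :=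
  fun w => if w ∈ E then τ w β else β w

/-- An existential strategy is valid if each `τ x` for existential `x` depends only on
the universal variables that `x` depends on. -/
def strategyValid (E U : Finset V) (D : V → V → Prop) (τ : V → (V → Bool) → Bool) : Prop :=
  ∀ x ∈ E, ∀ β β' : V → Bool, (∀ w ∈ U, D w x → β w = β' w) → τ x β = τ x β'

/-- Primal-graph adjacency: two distinct variables co-occur in some clause of `φ`. -/
def primalAdj (φ : CNF V) (a b : V) : Prop :=
  a ≠ b ∧ ∃ C ∈ φ, varIn a C ∧ varIn b C

/-- `Anc parent t s`: `s` is a (weak) ancestor of `t` in the rooted tree given by `parent`. -/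
def Anc {ι : Type} (parent : ι → ι) (t s : ι) : Prop := ∃ k : ℕ, parent^[k] t = s

/-- A (rooted) tree decomposition of a graph `G`, presented via a parent function on the
nodes, bags, and for each vertex the unique highest node `forget v` whose bag contains `v`.
The bags containing a vertex form a subtree rooted at `forget v`, every edge is covered
by some bag, and (as in nice tree decompositions) distinct variables are forgotten at
distinct nodes. -/
structure TreeDecomp (ι V : Type) (G : SimpleGraph V) where
  parent : ι → ι
  root : ι
  parent_root : parent root = root
  reaches_root : ∀ t, Anc parent t root
  bag : ι → Finset V
  forget : V → ι
  forget_mem : ∀ v, v ∈ bag (forget v)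
  forget_top : ∀ v t, v ∈ bag t → Anc parent t (forget v)
  bag_subtree : ∀ v t s, v ∈ bag t → Anc parent t s → Anc parent s (forget v) → v ∈ bag s
  forget_inj : Function.Injective forget
  edge_cover : ∀ a b, G.Adj a b → ∃ t, a ∈ bag t ∧ b ∈ bag t

/-- Trunk-alignment: for every variable `u`, either (P1) no variable depending on `u`
occurs in the bag where `u` is forgotten, or (P2) `u` is forgotten on the trunk and
every variable that `u` depends on occurs in the subtree rooted at `forget u`. -/
def TrunkAligned {ι V : Type} {G : SimpleGraph V} (T : TreeDecomp ι V G)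
    (D : V → V → Prop) (Tr : Set ι) : Prop :=
  ∀ u : V,
    (∀ v : V, D u v → v ≠ u → v ∉ T.bag (T.forget u)) ∨
    (T.forget u ∈ Tr ∧ ∀ v : V, D v u → ∃ t, Anc T.parent t (T.forget u) ∧ v ∈ T.bag t)

/-- `T_{≤ p}`: the variables occurring in some bag of the subtree rooted at `p`. -/
def belowVars {ι V : Type} {G : SimpleGraph V} (T : TreeDecomp ι V G) (p : ι) : Set V :=
  { w | ∃ s, Anc T.parent s p ∧ w ∈ T.bag s }

/-- The variables of `QParity_n`. -/
inductive PVtx (n : ℕ) : Type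
  | x : Fin n → PVtx n
  | z : Fin n → PVtx n
  | u : PVtx n
  deriving DecidableEq

/-- The edges of the primal graph of `QParity_n` (before symmetrization):
`{x_i, z_i}`, `{x_{i+1}, z_i}`, `{z_i, z_{i+1}}` and `{u, z_n}` (all 0-indexed). -/
def parityRel (n : ℕ) : PVtx n → PVtx n → Prop
  | PVtx.x i, PVtx.z j => i = j ∨ (i : ℕ) = (j : ℕ) + 1
  | PVtx.z i, PVtx.z j => (j : ℕ) = (i : ℕ) + 1
  | PVtx.u, PVtx.z j => (j : ℕ) = n - 1
  | _, _ => False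

/-- The primal graph of `QParity_n`. -/
def GParity (n : ℕ) : SimpleGraph (PVtx n) := SimpleGraph.fromRel (parityRel n)

/-- The trivial dependency poset of `QParity_n`: all the `x`'s precede `u`, which
precedes all the `z`'s. -/
def parityDep (n : ℕ) : PVtx n → PVtx n → Prop := fun a b =>
  a = b ∨ (∃ i, a = PVtx.x i ∧ (b = PVtx.u ∨ ∃ j, b = PVtx.z j)) ∨
    (a = PVtx.u ∧ ∃ j, b = PVtx.z j)

/-- Fill-in adjacency of a graph `G` w.r.t. an elimination ordering given by positions
`pos`: two distinct vertices are adjacent in the fill-in graph iff they are joined by a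
walk all of whose internal vertices are eliminated before both of them. -/
def fillAdj {α : Type} (G : SimpleGraph α) (pos : α → ℕ) (a b : α) : Prop :=
  a ≠ b ∧ ∃ p : G.Walk a b,
    ∀ c ∈ p.support, c ≠ a → c ≠ b → pos c < pos a ∧ pos c < pos b

/-- The directed graph `D^{trv}_{QParity_n}`: every primal edge in both directions,
plus a directed edge `(a,b)` whenever `a` strictly precedes `b` in the trivial
dependency order. -/
def dstep (n : ℕ) : PVtx n → PVtx n → Prop := fun a b =>
  (GParity n).Adj a b ∨ (∃ i j, a = PVtx.x i ∧ b = PVtx.z j) ∨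
    (∃ i, a = PVtx.x i ∧ b = PVtx.u) ∨ (∃ j, a = PVtx.u ∧ b = PVtx.z j)

/-! ### Auxiliary material for the proof of Statement 11 -/

section Aux

lemma anc_refl {ι : Type} (p : ι → ι) (t : ι) : Anc p t t := ⟨0, rfl⟩

lemma anc_trans {ι : Type} {p : ι → ι} {a b c : ι} (h1 : Anc p a b) (h2 : Anc p b c) :
    Anc p a c := by
  obtain ⟨k, hk⟩ := h1; obtain ⟨m, hm⟩ := h2
  exact ⟨m + k, by rw [Function.iterate_add_apply, hk, hm]⟩

lemma anc_comp {ι : Type} {p : ι → ι} {t a b : ι} (ha : Anc p t a) (hb : Anc p t b) :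
    Anc p a b ∨ Anc p b a := by
  obtain ⟨k, hk⟩ := ha; obtain ⟨m, hm⟩ := hb
  rcases le_total k m with h | h
  · exact Or.inl ⟨m - k, by rw [← hk, ← Function.iterate_add_apply, Nat.sub_add_cancel h, hm]⟩
  · exact Or.inr ⟨k - m, by rw [← hm, ← Function.iterate_add_apply, Nat.sub_add_cancel h, hk]⟩

lemma low_bag {ι V : Type} {G : SimpleGraph V} (T : TreeDecomp ι V G) {a b : V}
    (hab : ∃ t, a ∈ T.bag t ∧ b ∈ T.bag t)
    (h : Anc T.parent (T.forget a) (T.forget b)) : b ∈ T.bag (T.forget a) := by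
  obtain ⟨t, hta, htb⟩ := hab
  exact T.bag_subtree b t (T.forget a) htb (T.forget_top a t hta) h

lemma comp_forget {ι V : Type} {G : SimpleGraph V} (T : TreeDecomp ι V G) {a b : V}
    (hab : ∃ t, a ∈ T.bag t ∧ b ∈ T.bag t) :
    Anc T.parent (T.forget a) (T.forget b) ∨ Anc T.parent (T.forget b) (T.forget a) := by
  obtain ⟨t, hta, htb⟩ := hab
  exact anc_comp (T.forget_top a t hta) (T.forget_top b t htb)

/-- Any triangle of `G` is contained in some bag of any tree decomposition. -/
lemma triangle_bag {ι V : Type} {G : SimpleGraph V} (T : TreeDecomp ι V G) {a b c : V}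
    (hab : G.Adj a b) (hbc : G.Adj b c) (hac : G.Adj a c) :
    ∃ t, a ∈ T.bag t ∧ b ∈ T.bag t ∧ c ∈ T.bag t := by
  have eab := T.edge_cover a b hab
  have ebc := T.edge_cover b c hbc
  have eac := T.edge_cover a c hac
  have eba : ∃ t, b ∈ T.bag t ∧ a ∈ T.bag t := by obtain ⟨t, h1, h2⟩ := eab; exact ⟨t, h2, h1⟩
  have ecb : ∃ t, c ∈ T.bag t ∧ b ∈ T.bag t := by obtain ⟨t, h1, h2⟩ := ebc; exact ⟨t, h2, h1⟩
  have eca : ∃ t, c ∈ T.bag t ∧ a ∈ T.bag t := by obtain ⟨t, h1, h2⟩ := eac; exact ⟨t, h2, h1⟩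
  rcases comp_forget T eab with h1 | h1
  · rcases comp_forget T eac with h2 | h2
    · exact ⟨T.forget a, T.forget_mem a, low_bag T eab h1, low_bag T eac h2⟩
    · exact ⟨T.forget c, low_bag T eca h2, low_bag T ecb (anc_trans h2 h1), T.forget_mem c⟩
  · rcases comp_forget T ebc with h2 | h2
    · exact ⟨T.forget b, low_bag T eba h1, T.forget_mem b, low_bag T ebc h2⟩
    · exact ⟨T.forget c, low_bag T eca (anc_trans h2 h1), low_bag T ecb h2, T.forget_mem c⟩

variable (n : ℕ)

instance : Fintype (PVtx n) :=
  Fintype.ofEquiv (Fin n ⊕ Fin n ⊕ Unit)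
  { toFun := fun s => match s with
      | .inl i => .x i | .inr (.inl i) => .z i | .inr (.inr _) => .u
    invFun := fun v => match v with
      | .x i => .inl i | .z i => .inr (.inl i) | .u => .inr (.inr ())
    left_inv := by rintro (i | i | ⟨⟩) <;> rfl
    right_inv := by rintro (i | i | _) <;> rfl }

/-- Lower end of the interval of nodes whose bag contains a vertex. -/
def plo : PVtx n → ℕ
  | .x i => 3 * i
  | .z i => 3 * i
  | .u => 3 * n

/-- Upper end (= forget node) of the interval of nodes whose bag contains a vertex. -/
def phi : PVtx n → ℕ
  | .x i => 3 * i + 1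
  | .z i => 3 * i + 3
  | .u => 3 * n + 1

/-- Parent function of the path decomposition: a path `0 → 1 → ⋯ → 3n+1`. -/
def pp (t : ℕ) : ℕ := if t < 3 * n + 1 then t + 1 else 3 * n + 1

/-- The bags of the path decomposition. -/
def pbag (t : ℕ) : Finset (PVtx n) :=
  Finset.univ.filter (fun v => plo n v ≤ t ∧ t ≤ phi n v)

lemma mem_pbag {t : ℕ} {v : PVtx n} : v ∈ pbag n t ↔ plo n v ≤ t ∧ t ≤ phi n v := by
  simp [pbag]

lemma phi_le (v : PVtx n) : phi n v ≤ 3 * n + 1 := by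
  cases v with
  | x i => have := i.isLt; simp only [phi]; omega
  | z i => have := i.isLt; simp only [phi]; omega
  | u => simp [phi]

lemma plo_le_phi (v : PVtx n) : plo n v ≤ phi n v := by
  cases v <;> simp [plo, phi]

lemma pp_iter_bound (k t : ℕ) (h : t ≤ 3 * n + 1) :
    t ≤ (pp n)^[k] t ∧ (pp n)^[k] t ≤ 3 * n + 1 := by
  induction k generalizing t with
  | zero => simp [h]
  | succ k ih =>
    rw [Function.iterate_succ_apply]
    have h1 : t ≤ pp n t ∧ pp n t ≤ 3 * n + 1 := by unfold pp; split <;> omega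
    obtain ⟨ih1, ih2⟩ := ih (pp n t) h1.2
    exact ⟨le_trans h1.1 ih1, ih2⟩

lemma pp_iter_add (k t : ℕ) (h : t + k ≤ 3 * n + 1) : (pp n)^[k] t = t + k := by
  induction k generalizing t with
  | zero => simp
  | succ k ih =>
    rw [Function.iterate_succ_apply]
    have hpt : pp n t = t + 1 := by unfold pp; split <;> omega
    rw [hpt, ih (t + 1) (by omega)]
    omega

lemma pp_anc_le {t s : ℕ} (h1 : t ≤ s) (h2 : s ≤ 3 * n + 1) : Anc (pp n) t s :=
  ⟨s - t, by rw [pp_iter_add n (s - t) t (by omega)]; omega⟩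

lemma pp_anc_char {t s : ℕ} (ht : t ≤ 3 * n + 1) (h : Anc (pp n) t s) :
    t ≤ s ∧ s ≤ 3 * n + 1 := by
  obtain ⟨k, hk⟩ := h
  have := pp_iter_bound n k t ht
  rw [hk] at this
  exact this

/-- The explicit width-2 path decomposition of the primal graph of `QParity_n`. -/
def TD : TreeDecomp ℕ (PVtx n) (GParity n) where
  parent := pp n
  root := 3 * n + 1
  parent_root := by unfold pp; simp
  reaches_root := by
    intro t
    by_cases h : t ≤ 3 * n + 1
    · exact pp_anc_le n h (le_refl _)
    · exact ⟨1, by unfold pp; simp only [Function.iterate_one]; split <;> omega⟩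
  bag := pbag n
  forget := phi n
  forget_mem := fun v => (mem_pbag n).2 ⟨plo_le_phi n v, le_refl _⟩
  forget_top := by
    intro v t hv
    obtain ⟨h1, h2⟩ := (mem_pbag n).1 hv
    exact pp_anc_le n h2 (phi_le n v)
  bag_subtree := by
    intro v t s hv hts hsf
    obtain ⟨h1, h2⟩ := (mem_pbag n).1 hv
    have htR : t ≤ 3 * n + 1 := le_trans h2 (phi_le n v)
    obtain ⟨h3, h4⟩ := pp_anc_char n htR hts
    obtain ⟨h5, _⟩ := pp_anc_char n h4 hsf
    exact (mem_pbag n).2 ⟨le_trans h1 h3, h5⟩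
  forget_inj := by
    intro v w h
    cases v with
    | x i =>
      cases w with
      | x j => simp only [phi] at h; exact congrArg PVtx.x (Fin.ext (by omega))
      | z j => simp only [phi] at h; omega
      | u => have := i.isLt; simp only [phi] at h; omega
    | z i =>
      cases w with
      | x j => simp only [phi] at h; omega
      | z j => simp only [phi] at h; exact congrArg PVtx.z (Fin.ext (by omega))
      | u => simp only [phi] at h; omega
    | u =>
      cases w with
      | x j => have := j.isLt; simp only [phi] at h; omega
      | z j => simp only [phi] at h; omega
      | u => rfl
  edge_cover := by
    intro a b hadj
    rw [GParity, SimpleGraph.fromRel_adj] at hadj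
    obtain ⟨hne, hrel⟩ := hadj
    cases a with
    | x i =>
      cases b with
      | x j => simp [parityRel] at hrel
      | z j =>
        have hij : (i : Fin n) = j ∨ (i : ℕ) = (j : ℕ) + 1 := by
          rcases hrel with h | h
          · exact h
          · simp [parityRel] at h
        rcases hij with h | h
        · subst h
          exact ⟨3 * i, (mem_pbag n).2 (by simp [plo, phi]),
            (mem_pbag n).2 (by simp [plo, phi])⟩
        · exact ⟨3 * (i : ℕ), (mem_pbag n).2 (by simp [plo, phi]),
            (mem_pbag n).2 (by simp only [plo, phi]; omega)⟩
      | u => simp [parityRel] at hrel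
    | z i =>
      cases b with
      | x j =>
        have hij : (j : Fin n) = i ∨ (j : ℕ) = (i : ℕ) + 1 := by
          rcases hrel with h | h
          · simp [parityRel] at h
          · exact h
        rcases hij with h | h
        · subst h
          exact ⟨3 * j, (mem_pbag n).2 (by simp [plo, phi]),
            (mem_pbag n).2 (by simp [plo, phi])⟩
        · exact ⟨3 * (j : ℕ), (mem_pbag n).2 (by simp only [plo, phi]; omega),
            (mem_pbag n).2 (by simp [plo, phi])⟩
      | z j =>
        have hij : (j : ℕ) = (i : ℕ) + 1 ∨ (i : ℕ) = (j : ℕ) + 1 := by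
          rcases hrel with h | h
          · exact Or.inl h
          · exact Or.inr h
        rcases hij with h | h
        · exact ⟨3 * (j : ℕ), (mem_pbag n).2 (by simp only [plo, phi]; omega),
            (mem_pbag n).2 (by simp [plo, phi])⟩
        · exact ⟨3 * (i : ℕ), (mem_pbag n).2 (by simp [plo, phi]),
            (mem_pbag n).2 (by simp only [plo, phi]; omega)⟩
      | u =>
        have hi : (i : ℕ) = n - 1 := by
          rcases hrel with h | h
          · simp [parityRel] at h
          · exact h
        have := i.isLt
        exact ⟨3 * n, (mem_pbag n).2 (by simp only [plo, phi]; omega),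
          (mem_pbag n).2 (by simp [plo, phi])⟩
    | u =>
      cases b with
      | x j => simp [parityRel] at hrel
      | z j =>
        have hj : (j : ℕ) = n - 1 := by
          rcases hrel with h | h
          · exact h
          · simp [parityRel] at h
        have := j.isLt
        exact ⟨3 * n, (mem_pbag n).2 (by simp [plo, phi]),
          (mem_pbag n).2 (by simp only [plo, phi]; omega)⟩
      | u => simp [parityRel] at hrel

lemma pbag_card_le (t : ℕ) : (pbag n t).card ≤ 3 := by
  classical
  set S : Finset (PVtx n) :=
    (if h : t / 3 < n then ({PVtx.x ⟨t / 3, h⟩, PVtx.z ⟨t / 3, h⟩} : Finset (PVtx n))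
      else {PVtx.u}) ∪
    (if h : t / 3 - 1 < n then ({PVtx.z ⟨t / 3 - 1, h⟩} : Finset (PVtx n)) else ∅) with hS
  have hsub : pbag n t ⊆ S := by
    intro v hv
    obtain ⟨h1, h2⟩ := (mem_pbag n).1 hv
    rw [hS]
    cases v with
    | x i =>
      have hi := i.isLt
      simp only [plo, phi] at h1 h2
      have hq : t / 3 = (i : ℕ) := by omega
      refine Finset.mem_union_left _ ?_
      rw [dif_pos (hq ▸ hi)]
      simp only [Finset.mem_insert]
      exact Or.inl (congrArg PVtx.x (Fin.ext (by simp [hq])))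
    | z i =>
      have hi := i.isLt
      simp only [plo, phi] at h1 h2
      by_cases hc : t ≤ 3 * (i : ℕ) + 2
      · have hq : t / 3 = (i : ℕ) := by omega
        refine Finset.mem_union_left _ ?_
        rw [dif_pos (hq ▸ hi)]
        simp only [Finset.mem_insert, Finset.mem_singleton]
        right
        exact congrArg PVtx.z (Fin.ext (by simp [hq]))
      · have hq : t / 3 - 1 = (i : ℕ) := by omega
        refine Finset.mem_union_right _ ?_
        rw [dif_pos (hq ▸ hi)]
        simp only [Finset.mem_singleton]
        exact congrArg PVtx.z (Fin.ext (by simp [hq]))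
    | u =>
      simp only [plo, phi] at h1 h2
      have hq : t / 3 = n := by omega
      refine Finset.mem_union_left _ ?_
      rw [dif_neg (by omega)]
      exact Finset.mem_singleton_self _
  have hcard : S.card ≤ 3 := by
    refine le_trans (Finset.card_union_le _ _) ?_
    have c1 : (if h : t / 3 < n then ({PVtx.x ⟨t / 3, h⟩, PVtx.z ⟨t / 3, h⟩} : Finset (PVtx n))
        else {PVtx.u}).card ≤ 2 := by
      split
      · exact le_trans (Finset.card_insert_le _ _) (by simp)
      · simp
    have c2 : (if h : t / 3 - 1 < n then ({PVtx.z ⟨t / 3 - 1, h⟩} : Finset (PVtx n))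
        else ∅).card ≤ 1 := by
      split <;> simp
    omega
  exact le_trans (Finset.card_le_card hsub) hcard

lemma dep_of_z {i : Fin n} {v : PVtx n} (h : parityDep n (PVtx.z i) v) : v = PVtx.z i := by
  rcases h with h | ⟨k, hk, _⟩ | ⟨hk, _⟩
  · exact h.symm
  · exact absurd hk (by simp)
  · exact absurd hk (by simp)

lemma dep_to_x {i : Fin n} {v : PVtx n} (h : parityDep n v (PVtx.x i)) : v = PVtx.x i := by
  rcases h with h | ⟨k, _, h | ⟨j, h⟩⟩ | ⟨_, j, h⟩
  · exact h
  · exact absurd h (by simp)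
  · exact absurd h (by simp)
  · exact absurd h (by simp)

end Aux

/-- for every `n ≥ 2`, the bilateral treewidth of `QParity_n` with
respect to the trivial dependency poset equals 2: there is a trunk-aligned tree
decomposition of width 2 (all bags have at most 3 vertices) whose trunk is a full
leaf-to-root path, and every trunk-aligned tree decomposition has width at least 2
(some bag has at least 3 vertices). -/
theorem stmt11 (n : ℕ) (hn : 2 ≤ n) :
    (∃ (ι : Type) (T : TreeDecomp ι (PVtx n) (GParity n)) (t₀ : ι),
        TrunkAligned T (parityDep n) { s | Anc T.parent t₀ s } ∧
        ∀ t, (T.bag t).card ≤ 3) ∧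
    (∀ (ι : Type) (T : TreeDecomp ι (PVtx n) (GParity n)) (t₀ : ι),
        TrunkAligned T (parityDep n) { s | Anc T.parent t₀ s } →
        ∃ t, 3 ≤ (T.bag t).card) := by
  constructor
  · -- upper bound: the explicit path decomposition
    refine ⟨ℕ, TD n, 0, ?_, fun t => pbag_card_le n t⟩
    intro w
    cases w with
    | x i =>
      right
      refine ⟨?_, ?_⟩
      · show Anc (pp n) 0 (phi n (PVtx.x i))
        exact pp_anc_le n (Nat.zero_le _) (phi_le n _)
      · intro v hD
        have hv := dep_to_x n hD
        subst hv
        exact ⟨(TD n).forget (PVtx.x i), anc_refl _ _, (TD n).forget_mem _⟩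
    | z i =>
      left
      intro v hD hne
      exact absurd (dep_of_z n hD) hne
    | u =>
      right
      refine ⟨?_, ?_⟩
      · show Anc (pp n) 0 (phi n PVtx.u)
        exact pp_anc_le n (Nat.zero_le _) (phi_le n _)
      · intro v _
        exact ⟨(TD n).forget v, (TD n).reaches_root _, (TD n).forget_mem v⟩
  · -- lower bound: the triangle x₁, z₀, z₁ forces a bag of size 3
    intro ι T t₀ _
    have h1 : (1 : ℕ) < n := by omega
    have h0 : (0 : ℕ) < n := by omega
    set a : PVtx n := PVtx.x ⟨1, h1⟩ with ha
    set b : PVtx n := PVtx.z ⟨0, h0⟩ with hb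
    set c : PVtx n := PVtx.z ⟨1, h1⟩ with hc
    have hab : (GParity n).Adj a b := by
      rw [GParity, SimpleGraph.fromRel_adj]
      exact ⟨by simp [ha, hb], Or.inl (Or.inr (by simp))⟩
    have hbc : (GParity n).Adj b c := by
      rw [GParity, SimpleGraph.fromRel_adj]
      exact ⟨by simp [hb, hc, Fin.ext_iff], Or.inl (by simp [hb, hc, parityRel])⟩
    have hac : (GParity n).Adj a c := by
      rw [GParity, SimpleGraph.fromRel_adj]
      exact ⟨by simp [ha, hc], Or.inl (Or.inl rfl)⟩
    obtain ⟨t, hta, htb, htc⟩ := triangle_bag T hab hbc hac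
    refine ⟨t, ?_⟩
    have hsub : ({a, b, c} : Finset (PVtx n)) ⊆ T.bag t := by
      intro v hv
      simp only [Finset.mem_insert, Finset.mem_singleton] at hv
      rcases hv with rfl | rfl | rfl
      · exact hta
      · exact htb
      · exact htc
    have hcard : ({a, b, c} : Finset (PVtx n)).card = 3 := by
      rw [Finset.card_insert_of_notMem (by simp [ha, hb, hc]),
        Finset.card_insert_of_notMem (by simp [hb, hc, Fin.ext_iff]),
        Finset.card_singleton]
    calc 3 = ({a, b, c} : Finset (PVtx n)).card := hcard.symm
      _ ≤ (T.bag t).card := Finset.card_le_card hsub
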